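/- Let P be a span program on [q]^m that decides a function f : X → {0,1}, where X ⊆ [q]^m. Then there exists a span program P† on [q]^m that decides the negation ¬f (i.e. every x ∈ X with f(x) = 0 has a positive witness in P† and every x ∈ X with f(x) = 1 has a negative witness in P†) and such that for every x ∈ X, w(P†, x) ≤ w(P, x). -/

import Mathlib

noncomputable section

/-- A span program `P = (H, V, τ, A)` on `[q]^m`:
finite-dimensional complex inner product spaces `H` and `V`, an orthogonal
decomposition `H = H_1 ⊕ ⋯ ⊕ H_m ⊕ H_true ⊕ H_false`, subspaces
`H_{j,a} ⊆ H_j` with `Σ_a H_{j,a} = H_j`, a target `τ ∈ V` and `A : H → V`. -/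
structure SpanProgram (q m : ℕ) where
  H : Type
  V : Type
  [nH : NormedAddCommGroup H]
  [iH : InnerProductSpace ℂ H]
  [fH : FiniteDimensional ℂ H]
  [nV : NormedAddCommGroup V]
  [iV : InnerProductSpace ℂ V]
  [fV : FiniteDimensional ℂ V]
  Hj : Fin m → Submodule ℂ H
  Htrue : Submodule ℂ H
  Hfalse : Submodule ℂ H
  ortho : ∀ i i' : Fin m ⊕ Bool, i ≠ i' →
    (Sum.elim Hj (fun b => if b then Htrue else Hfalse) i).IsOrtho
      (Sum.elim Hj (fun b => if b then Htrue else Hfalse) i')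
  spans : (⨆ j, Hj j) ⊔ Htrue ⊔ Hfalse = ⊤
  Hja : Fin m → Fin q → Submodule ℂ H
  Hja_le : ∀ j a, Hja j a ≤ Hj j
  Hja_sup : ∀ j, (⨆ a, Hja j a) = Hj j
  tau : V
  A : H →ₗ[ℂ] V

attribute [instance] SpanProgram.nH SpanProgram.iH SpanProgram.fH
attribute [instance] SpanProgram.nV SpanProgram.iV SpanProgram.fV

namespace SpanProgram

variable {q m : ℕ} (P : SpanProgram q m)

/-- `H(x) = H_{1,x_1} ⊕ ⋯ ⊕ H_{m,x_m} ⊕ H_true`. -/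
def Hx (x : Fin m → Fin q) : Submodule ℂ P.H :=
  (⨆ j, P.Hja j (x j)) ⊔ P.Htrue

/-- `w` is a positive witness for `x`: `w ∈ H(x)` and `A w = τ`. -/
def PosWitness (x : Fin m → Fin q) (w : P.H) : Prop :=
  w ∈ P.Hx x ∧ P.A w = P.tau

/-- `ω` is a negative witness for `x`: `ω(τ) = 1` and `ω ∘ A ∘ Π_{H(x)} = 0`. -/
def NegWitness (x : Fin m → Fin q) (ω : P.V →ₗ[ℂ] ℂ) : Prop :=
  ω P.tau = 1 ∧ ∀ h ∈ P.Hx x, ω (P.A h) = 0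

def HasPos (x : Fin m → Fin q) : Prop := ∃ w, P.PosWitness x w

def HasNeg (x : Fin m → Fin q) : Prop := ∃ ω, P.NegWitness x ω

/-- positive witness size: `min{‖w‖² : w a positive witness for x}`. -/
def posSize (x : Fin m → Fin q) : ℝ :=
  sInf {r : ℝ | ∃ w, P.PosWitness x w ∧ r = ‖w‖ ^ 2}

/-- negative witness size: `min{‖ω∘A‖² : ω a negative witness for x}`, where
`‖ω∘A‖` is the norm of (the Riesz representative of) the functional `ω∘A`. -/
def negSize (x : Fin m → Fin q) : ℝ :=
  sInf {r : ℝ | ∃ ω, P.NegWitness x ω ∧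
    r = ‖LinearMap.toContinuousLinearMap (ω ∘ₗ P.A)‖ ^ 2}

open Classical in
/-- the witness size `w(P,x)`. -/
def witSize (x : Fin m → Fin q) : ℝ :=
  if P.HasPos x then P.posSize x else P.negSize x

/-- `P` decides `f` on `X`: every `x ∈ X` with `f x = 1` has a positive witness and
every `x ∈ X` with `f x = 0` has a negative witness. -/
def Decides (X : Set (Fin m → Fin q)) (f : (Fin m → Fin q) → Bool) : Prop :=
  ∀ x ∈ X, (f x = true → P.HasPos x) ∧ (f x = false → P.HasNeg x)

end SpanProgram

open InnerProductSpace Submodule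

namespace SPDual
variable {q m : ℕ} (P : SpanProgram q m)

abbrev dV := WithLp 2 (ℂ × P.H)

def emb : P.H →ₗ[ℂ] dV P :=
  (WithLp.linearEquiv 2 ℂ (ℂ × P.H)).symm.toLinearMap ∘ₗ LinearMap.inr ℂ ℂ P.H

def e1 : dV P := (WithLp.equiv 2 (ℂ × P.H)).symm (1, 0)

def B : P.V →ₗ[ℂ] dV P :=
  (WithLp.linearEquiv 2 ℂ (ℂ × P.H)).symm.toLinearMap ∘ₗ
    LinearMap.prod (innerSL ℂ P.tau).toLinearMap (LinearMap.adjoint P.A)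

def W : Submodule ℂ (dV P) := LinearMap.range (B P)

def Pr : dV P →L[ℂ] dV P := (W P)ᗮ.subtypeL.comp (orthogonalProjection (W P)ᗮ)

def taud : dV P := - Pr P (e1 P)

def Ad : P.H →ₗ[ℂ] dV P := (Pr P).toLinearMap ∘ₗ emb P

def HjaD (j : Fin m) (a : Fin q) : Submodule ℂ P.H := P.Hj j ⊓ (P.Hja j a)ᗮ
def HjD (j : Fin m) : Submodule ℂ P.H := ⨆ a, HjaD P j a
def HfD : Submodule ℂ P.H := P.Htrue ⊔ ⨆ j, (P.Hj j ⊓ (HjD P j)ᗮ)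

lemma HjD_le (j) : HjD P j ≤ P.Hj j := iSup_le fun _ => inf_le_left

-- small sanity checks on components
example (w : P.H) : (emb P w).fst = 0 := rfl
example (w : P.H) : (emb P w).snd = w := rfl
example : (e1 P).fst = 1 := rfl
example (u : P.V) : (B P u).fst = ⟪P.tau, u⟫_ℂ := rfl
example (u : P.V) : (B P u).snd = LinearMap.adjoint P.A u := rfl
example (w : P.H) : emb P w + e1 P = (WithLp.equiv 2 (ℂ × P.H)).symm (1, w) := by
  apply (WithLp.equiv 2 (ℂ × P.H)).injective
  ext <;> simp [emb, e1]

def dual : SpanProgram q m where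
  H := P.H
  V := dV P
  Hj := HjD P
  Htrue := P.Hfalse
  Hfalse := HfD P
  ortho := by
    have hfal : ∀ j : Fin m, (P.Hj j).IsOrtho P.Hfalse := fun j =>
      P.ortho (.inl j) (.inr false) (by simp)
    have htru : ∀ j : Fin m, (P.Hj j).IsOrtho P.Htrue := fun j =>
      P.ortho (.inl j) (.inr true) (by simp)
    have hjj : ∀ j j' : Fin m, j ≠ j' → (P.Hj j).IsOrtho (P.Hj j') := fun j j' h =>
      P.ortho (.inl j) (.inl j') (by simp [h])
    have L1 : ∀ j j' : Fin m, j ≠ j' → (HjD P j).IsOrtho (HjD P j') := fun j j' h =>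
      (hjj j j' h).mono (HjD_le P j) (HjD_le P j')
    have L2 : ∀ j, (HjD P j).IsOrtho P.Hfalse := fun j =>
      (hfal j).mono (HjD_le P j) le_rfl
    have L3 : ∀ j, (HjD P j).IsOrtho (HfD P) := by
      intro j
      rw [HfD, Submodule.isOrtho_sup_right]
      refine ⟨(htru j).mono (HjD_le P j) le_rfl, ?_⟩
      rw [Submodule.isOrtho_iSup_right]
      intro j'
      by_cases h : j = j'
      · subst h
        exact (Submodule.isOrtho_orthogonal_right (HjD P j)).mono le_rfl inf_le_right
      · exact (hjj j j' h).mono (HjD_le P j) inf_le_left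
    have L4 : P.Hfalse.IsOrtho (HfD P) := by
      rw [HfD, Submodule.isOrtho_sup_right]
      refine ⟨(P.ortho (.inr false) (.inr true) (by simp) : _), ?_⟩
      rw [Submodule.isOrtho_iSup_right]
      intro j'
      exact ((hfal j').symm).mono le_rfl inf_le_left
    rintro (j | b) (j' | b') hne
    · exact L1 j j' (by simpa using hne)
    · cases b' with
      | true  => exact L2 j
      | false => exact L3 j
    · cases b with
      | true  => exact (L2 j').symm
      | false => exact (L3 j').symm
    · cases b <;> cases b'
      · exact absurd rfl hne
      · exact L4.symm
      · exact L4
      · exact absurd rfl hne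
  spans := by
    rw [eq_top_iff, ← P.spans]
    have key : ∀ j, P.Hj j ≤ (⨆ j, HjD P j) ⊔ P.Hfalse ⊔ HfD P := by
      intro j
      rw [← Submodule.sup_orthogonal_inf_of_hasOrthogonalProjection (HjD_le P j)]
      apply sup_le
      · exact le_trans (le_iSup _ j) (le_trans le_sup_left le_sup_left)
      · refine le_trans ?_ le_sup_right
        refine le_trans (le_inf inf_le_right inf_le_left) ?_
        exact le_trans (le_iSup (fun j => P.Hj j ⊓ (HjD P j)ᗮ) j) le_sup_right
    refine sup_le (sup_le (iSup_le key) ?_) ?_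
    · exact le_trans le_sup_left le_sup_right
    · exact le_trans le_sup_right le_sup_left
  Hja := HjaD P
  Hja_le := fun j a => le_iSup _ a
  Hja_sup := fun j => rfl
  tau := taud P
  A := Ad P


lemma dual_Hx (x : Fin m → Fin q) :
    (dual P).Hx x = (⨆ j, HjaD P j (x j)) ⊔ P.Hfalse := rfl

lemma hx_ortho (x : Fin m → Fin q) : (P.Hx x).IsOrtho ((dual P).Hx x) := by
  have hfal : ∀ j : Fin m, (P.Hj j).IsOrtho P.Hfalse := fun j =>
    P.ortho (.inl j) (.inr false) (by simp)
  have htru : ∀ j : Fin m, (P.Hj j).IsOrtho P.Htrue := fun j =>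
    P.ortho (.inl j) (.inr true) (by simp)
  have hjj : ∀ j j' : Fin m, j ≠ j' → (P.Hj j).IsOrtho (P.Hj j') := fun j j' h =>
    P.ortho (.inl j) (.inl j') (by simp [h])
  have htf : P.Htrue.IsOrtho P.Hfalse := P.ortho (.inr true) (.inr false) (by simp)
  rw [dual_Hx, SpanProgram.Hx, Submodule.isOrtho_sup_left, Submodule.isOrtho_iSup_left]
  constructor
  · intro j
    rw [Submodule.isOrtho_sup_right, Submodule.isOrtho_iSup_right]
    constructor
    · intro j'
      by_cases h : j = j'
      · subst h
        exact (Submodule.isOrtho_orthogonal_right (P.Hja j (x j))).mono le_rfl inf_le_right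
      · exact (hjj j j' h).mono (P.Hja_le j (x j)) inf_le_left
    · exact (hfal j).mono (P.Hja_le j (x j)) le_rfl
  · rw [Submodule.isOrtho_sup_right, Submodule.isOrtho_iSup_right]
    exact ⟨fun j' => ((htru j').symm).mono le_rfl inf_le_left, htf⟩

lemma dualHx_le_perp (x : Fin m → Fin q) : (dual P).Hx x ≤ (P.Hx x)ᗮ :=
  (hx_ortho P x).symm

lemma perp_le_dualHx (x : Fin m → Fin q) : (P.Hx x)ᗮ ≤ (dual P).Hx x := by
  intro v hv
  have hvtop : v ∈ (⨆ j, P.Hj j) ⊔ P.Htrue ⊔ P.Hfalse := by rw [P.spans]; trivial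
  obtain ⟨y, hy, vf, hvf, rfl⟩ := Submodule.mem_sup.1 hvtop
  obtain ⟨s, hs, vt, hvt, rfl⟩ := Submodule.mem_sup.1 hy
  obtain ⟨g, hg, hsum⟩ := (Submodule.mem_iSup_iff_exists_finsupp _ _).1 hs
  have hsum' : ∑ j, g j = s := by
    rw [← hsum]; exact (Finsupp.sum_fintype g (fun _ w => w) fun _ => rfl).symm
  have hfal : ∀ j : Fin m, (P.Hj j).IsOrtho P.Hfalse := fun j =>
    P.ortho (.inl j) (.inr false) (by simp)
  have htru : ∀ j : Fin m, (P.Hj j).IsOrtho P.Htrue := fun j =>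
    P.ortho (.inl j) (.inr true) (by simp)
  have hjj : ∀ j j' : Fin m, j ≠ j' → (P.Hj j).IsOrtho (P.Hj j') := fun j j' h =>
    P.ortho (.inl j) (.inl j') (by simp [h])
  have htf : P.Htrue.IsOrtho P.Hfalse := P.ortho (.inr true) (.inr false) (by simp)
  -- vt = 0
  have hvt0 : vt = 0 := by
    have h1 : ⟪vt, s + vt + vf⟫_ℂ = 0 :=
      (Submodule.mem_orthogonal _ _).1 hv vt (Submodule.mem_sup_right hvt)
    have h2 : ⟪vt, s⟫_ℂ = 0 := by
      rw [← hsum', inner_sum]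
      exact Finset.sum_eq_zero fun j _ => ((htru j).symm).inner_eq hvt (hg j)
    have h3 : ⟪vt, vf⟫_ℂ = 0 := htf.inner_eq hvt hvf
    rw [inner_add_right, inner_add_right, h2, h3, zero_add, add_zero] at h1
    exact inner_self_eq_zero.1 h1
  -- each g j ∈ HjaD
  have hgj : ∀ j, g j ∈ HjaD P j (x j) := by
    intro j
    refine ⟨hg j, (Submodule.mem_orthogonal _ _).2 fun u hu => ?_⟩
    have huj : u ∈ P.Hj j := P.Hja_le j (x j) hu
    have h1 : ⟪u, s + vt + vf⟫_ℂ = 0 :=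
      (Submodule.mem_orthogonal _ _).1 hv u
        (Submodule.mem_sup_left (Submodule.mem_iSup_of_mem j hu))
    have h2 : ⟪u, s⟫_ℂ = ⟪u, g j⟫_ℂ := by
      rw [← hsum', inner_sum]
      refine Finset.sum_eq_single j (fun j' _ hj' => ?_) (by simp)
      exact (hjj j j' (Ne.symm hj')).inner_eq huj (hg j')
    have h3 : ⟪u, vt⟫_ℂ = 0 := (htru j).inner_eq huj hvt
    have h4 : ⟪u, vf⟫_ℂ = 0 := (hfal j).inner_eq huj hvf
    rw [inner_add_right, inner_add_right, h2, h3, h4, add_zero, add_zero] at h1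
    exact h1
  rw [hvt0, add_zero]
  rw [dual_Hx]
  refine Submodule.add_mem _ (Submodule.mem_sup_left ?_) (Submodule.mem_sup_right hvf)
  rw [← hsum']
  exact Submodule.sum_mem _ fun j _ => Submodule.mem_iSup_of_mem j (hgj j)

lemma Pr_of_mem {z : dV P} (h : z ∈ (W P)ᗮ) : Pr P z = z := by
  show ((orthogonalProjection (W P)ᗮ z : _) : dV P) = z
  exact Submodule.starProjection_eq_self_iff.2 h

lemma Pr_B (u : P.V) : Pr P (B P u) = 0 := by
  have h : B P u ∈ ((W P)ᗮ)ᗮ := Submodule.le_orthogonal_orthogonal _ ⟨u, rfl⟩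
  show ((orthogonalProjection (W P)ᗮ (B P u) : _) : dV P) = 0
  rw [orthogonalProjection_mem_subspace_orthogonalComplement_eq_zero h]
  rfl

lemma inner_Pr (z v : dV P) : ⟪z, Pr P v⟫_ℂ = ⟪Pr P z, v⟫_ℂ :=
  (Submodule.inner_starProjection_left_eq_right _ z v).symm

lemma inner_pair (a c : ℂ) (b d : P.H) :
    ⟪(WithLp.equiv 2 (ℂ × P.H)).symm (a, b), (WithLp.equiv 2 (ℂ × P.H)).symm (c, d)⟫_ℂ
      = starRingEnd ℂ a * c + ⟪b, d⟫_ℂ := by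
  rw [WithLp.prod_inner_apply]
  simp [mul_comm]

/-- From a positive witness for `P` we get a negative witness for `dual P`. -/
lemma negD (x : Fin m → Fin q) (w : P.H) (hw : P.PosWitness x w) :
    ∃ ω, (dual P).NegWitness x ω ∧
      ‖LinearMap.toContinuousLinearMap (ω ∘ₗ (dual P).A)‖ ^ 2 = ‖w‖ ^ 2 := by
  obtain ⟨hwx, hwA⟩ := hw
  set zvec : dV P := (WithLp.equiv 2 (ℂ × P.H)).symm (-1, w) with hzvec
  have hzW : zvec ∈ (W P)ᗮ := by
    refine (Submodule.mem_orthogonal' _ _).2 ?_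
    rintro _ ⟨u, rfl⟩
    have h1 : ⟪zvec, B P u⟫_ℂ
        = starRingEnd ℂ (-1) * ⟪P.tau, u⟫_ℂ + ⟪w, LinearMap.adjoint P.A u⟫_ℂ :=
      inner_pair P _ _ _ _
    have h2 : ⟪w, LinearMap.adjoint P.A u⟫_ℂ = ⟪P.tau, u⟫_ℂ := by
      rw [LinearMap.adjoint_inner_right, hwA]
    rw [h1, h2]
    simp
  have hPrz : Pr P zvec = zvec := Pr_of_mem P hzW
  refine ⟨(innerSL ℂ zvec).toLinearMap, ⟨?_, ?_⟩, ?_⟩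
  · show ⟪zvec, taud P⟫_ℂ = 1
    rw [taud, inner_neg_right, inner_Pr, hPrz]
    have : ⟪zvec, e1 P⟫_ℂ = starRingEnd ℂ (-1) * 1 + ⟪w, (0 : P.H)⟫_ℂ := inner_pair P _ _ _ _
    rw [this]
    simp
  · intro h' hh'
    show ⟪zvec, Ad P h'⟫_ℂ = 0
    have hAd : Ad P h' = Pr P (emb P h') := rfl
    rw [hAd, inner_Pr, hPrz]
    have h1 : ⟪zvec, emb P h'⟫_ℂ = starRingEnd ℂ (-1) * 0 + ⟪w, h'⟫_ℂ := inner_pair P _ _ _ _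
    rw [h1]
    have h2 : ⟪w, h'⟫_ℂ = 0 :=
      (Submodule.mem_orthogonal (P.Hx x) h').1 (dualHx_le_perp P x hh') w hwx
    rw [h2]
    ring
  · have hfun : LinearMap.toContinuousLinearMap
        (((innerSL ℂ zvec).toLinearMap) ∘ₗ (dual P).A) = innerSL ℂ w := by
      apply ContinuousLinearMap.ext
      intro h'
      show ⟪zvec, Ad P h'⟫_ℂ = ⟪w, h'⟫_ℂ
      have hAd : Ad P h' = Pr P (emb P h') := rfl
      rw [hAd, inner_Pr, hPrz]
      have h1 : ⟪zvec, emb P h'⟫_ℂ = starRingEnd ℂ (-1) * 0 + ⟪w, h'⟫_ℂ := inner_pair P _ _ _ _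
      rw [h1]
      ring
    exact (congrArg (fun T => ‖T‖ ^ 2) hfun).trans (congrArg (· ^ 2) (innerSL_apply_norm ℂ w))

/-- From a negative witness for `P` we get a positive witness for `dual P`. -/
lemma posD (x : Fin m → Fin q) (ω : P.V →ₗ[ℂ] ℂ) (hω : P.NegWitness x ω) :
    ∃ w, (dual P).PosWitness x w ∧
      ‖w‖ ^ 2 = ‖LinearMap.toContinuousLinearMap (ω ∘ₗ P.A)‖ ^ 2 := by
  obtain ⟨hτ, hvan⟩ := hω
  set u : P.V := (InnerProductSpace.toDual ℂ P.V).symm (LinearMap.toContinuousLinearMap ω)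
    with hu_def
  have hu : ∀ v, ⟪u, v⟫_ℂ = ω v := fun v => InnerProductSpace.toDual_symm_apply
  set w : P.H := LinearMap.adjoint P.A u with hw_def
  have hwinner : ∀ h' : P.H, ⟪w, h'⟫_ℂ = ω (P.A h') := by
    intro h'
    rw [hw_def, LinearMap.adjoint_inner_left, hu]
  have hwmem : w ∈ (dual P).Hx x := by
    apply perp_le_dualHx
    refine (Submodule.mem_orthogonal _ _).2 fun u' hu' => ?_
    have : ⟪w, u'⟫_ℂ = 0 := by rw [hwinner u', hvan u' hu']
    rw [← inner_conj_symm, this, map_zero]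
  have hBu : emb P w + e1 P = B P u := by
    apply (WithLp.equiv 2 (ℂ × P.H)).injective
    have hτu : ⟪P.tau, u⟫_ℂ = 1 := by
      rw [← inner_conj_symm, hu, hτ, map_one]
    apply Prod.ext
    · show (0 : ℂ) + 1 = ⟪P.tau, u⟫_ℂ
      rw [hτu, zero_add]
    · show w + 0 = LinearMap.adjoint P.A u
      rw [add_zero, hw_def]
  have hAw : (dual P).A w = (dual P).tau := by
    show Ad P w = taud P
    have h2 : emb P w = B P u - e1 P := eq_sub_of_add_eq hBu
    show Pr P (emb P w) = taud P
    rw [h2, map_sub, Pr_B, taud]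
    abel
  refine ⟨w, ⟨hwmem, hAw⟩, ?_⟩
  have hfun : LinearMap.toContinuousLinearMap (ω ∘ₗ P.A) = innerSL ℂ w := by
    apply ContinuousLinearMap.ext
    intro h'
    show ω (P.A h') = ⟪w, h'⟫_ℂ
    rw [hwinner]
  rw [hfun, innerSL_apply_norm ℂ w]
  rfl

end SPDual

section Helpers
variable {q m : ℕ}

lemma not_pos_and_neg (Q : SpanProgram q m) (x : Fin m → Fin q)
    (hp : Q.HasPos x) (hn : Q.HasNeg x) : False := by
  obtain ⟨w, hwx, hwA⟩ := hp
  obtain ⟨ω, hτ, hvan⟩ := hn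
  have h0 : ω (Q.A w) = 0 := hvan w hwx
  rw [hwA, hτ] at h0
  exact one_ne_zero h0

lemma posSet_bdd (Q : SpanProgram q m) (x : Fin m → Fin q) :
    BddBelow {r : ℝ | ∃ w, Q.PosWitness x w ∧ r = ‖w‖ ^ 2} :=
  ⟨0, by rintro r ⟨w, _, rfl⟩; positivity⟩

lemma negSet_bdd (Q : SpanProgram q m) (x : Fin m → Fin q) :
    BddBelow {r : ℝ | ∃ ω, Q.NegWitness x ω ∧
      r = ‖LinearMap.toContinuousLinearMap (ω ∘ₗ Q.A)‖ ^ 2} :=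
  ⟨0, by rintro r ⟨ω, _, rfl⟩; positivity⟩

end Helpers


theorem span_program_negation {q m : ℕ} (hq : 2 ≤ q) (hm : 1 ≤ m)
    (P : SpanProgram q m) (X : Set (Fin m → Fin q)) (f : (Fin m → Fin q) → Bool)
    (hP : P.Decides X f) :
    ∃ Pd : SpanProgram q m,
      Pd.Decides X (fun x => !(f x)) ∧ ∀ x ∈ X, Pd.witSize x ≤ P.witSize x := by
  classical
  refine ⟨SPDual.dual P, ?_, ?_⟩
  · intro x hx
    constructor
    · intro hfx
      have hf0 : f x = false := by simpa using hfx
      obtain ⟨ω, hω⟩ := (hP x hx).2 hf0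
      obtain ⟨w, hw, _⟩ := SPDual.posD P x ω hω
      exact ⟨w, hw⟩
    · intro hfx
      have hf1 : f x = true := by simpa using hfx
      obtain ⟨w, hw⟩ := (hP x hx).1 hf1
      obtain ⟨ω, hω, _⟩ := SPDual.negD P x w hw
      exact ⟨ω, hω⟩
  · intro x hx
    by_cases hf : f x = true
    · have hpos : P.HasPos x := (hP x hx).1 hf
      have hnegd : (SPDual.dual P).HasNeg x := by
        obtain ⟨w, hw⟩ := hpos
        obtain ⟨ω, hω, _⟩ := SPDual.negD P x w hw
        exact ⟨ω, hω⟩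
      have hnotposd : ¬ (SPDual.dual P).HasPos x := fun h =>
        not_pos_and_neg _ x h hnegd
      rw [SpanProgram.witSize, SpanProgram.witSize, if_neg hnotposd, if_pos hpos]
      apply le_csInf
      · obtain ⟨w, hw⟩ := hpos
        exact ⟨‖w‖ ^ 2, w, hw, rfl⟩
      · rintro r ⟨w, hw, rfl⟩
        obtain ⟨ω, hω, hsz⟩ := SPDual.negD P x w hw
        rw [← hsz]
        exact csInf_le (negSet_bdd _ x) ⟨ω, hω, rfl⟩
    · have hf0 : f x = false := by simpa using hf
      have hneg : P.HasNeg x := (hP x hx).2 hf0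
      have hposd : (SPDual.dual P).HasPos x := by
        obtain ⟨ω, hω⟩ := hneg
        obtain ⟨w, hw, _⟩ := SPDual.posD P x ω hω
        exact ⟨w, hw⟩
      have hnotpos : ¬ P.HasPos x := fun h => not_pos_and_neg _ x h hneg
      rw [SpanProgram.witSize, SpanProgram.witSize, if_pos hposd, if_neg hnotpos]
      apply le_csInf
      · obtain ⟨ω, hω⟩ := hneg
        exact ⟨_, ω, hω, rfl⟩
      · rintro r ⟨ω, hω, rfl⟩
        obtain ⟨w, hw, hsz⟩ := SPDual.posD P x ω hω
        rw [← hsz]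
        exact csInf_le (posSet_bdd _ x) ⟨w, hw, rfl⟩
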